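/- Suppose σ : ℝ^{<ω} → ℝ is a strategy for Bob in the Baker game, always producing legal moves. For a finite sequence t = ⟨a_0,…,a_{n−1}⟩ of Alice's moves with σ(t) legal, define E_t = {x : a_{n−1} < x < σ(t) ∧ ∀ a, a_{n−1} < a < x → σ(t⌢⟨a⟩) ≤ x}. If x ∉ E_t for every finite sequence t of moves Alice could have made, then Alice has a counter-play (a_n)_{n∈ℕ}, strictly increasing, such that a_n < x < σ(⟨a_0,…,a_n⟩) for all n; i.e., x remains legal throughout the game against σ. -/

import Mathlib

/-- The elimination set E_t for Bob's strategy σ after Alice's moves t (with the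
conventions a₋₁ = −∞ and σ(⟨⟩) = +∞): points that are legal after t but which
every legal reply of Alice allows σ to eliminate. -/
def Et (σ : List ℝ → ℝ) (t : List ℝ) : Set ℝ :=
  {x : ℝ | (∀ l ∈ t.getLast?, l < x) ∧ (t ≠ [] → x < σ t) ∧
    ∀ a : ℝ, (∀ l ∈ t.getLast?, l < a) → a < x → σ (t ++ [a]) ≤ x}

open Classical in
/-- Choice of Alice's next move keeping x legal. -/
noncomputable def nxt (σ : List ℝ → ℝ) (x : ℝ) (t : List ℝ) : ℝ :=
  if h : ∃ a, (∀ l ∈ t.getLast?, l < a) ∧ a < x ∧ x < σ (t ++ [a]) then h.choose else 0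

/-- The sequence of positions in the counter-play. -/
noncomputable def Lseq (σ : List ℝ → ℝ) (x : ℝ) : ℕ → List ℝ
  | 0 => []
  | n + 1 => Lseq σ x n ++ [nxt σ x (Lseq σ x n)]

/-- If x avoids every elimination set E_t, then Alice has a counter-play keeping
x legal against σ throughout the game. -/
theorem counterplay_of_not_eliminated (σ : List ℝ → ℝ) (x : ℝ)
    (hx : ∀ t : List ℝ, x ∉ Et σ t) :
    ∃ a : ℕ → ℝ, StrictMono a ∧
      ∀ n, a n < x ∧ x < σ ((List.range (n + 1)).map a) := by
  classical
  have key : ∀ t : List ℝ, (∀ l ∈ t.getLast?, l < x) → (t ≠ [] → x < σ t) →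
      ∃ a, (∀ l ∈ t.getLast?, l < a) ∧ a < x ∧ x < σ (t ++ [a]) := by
    intro t h1 h2
    by_contra h
    push_neg at h
    exact hx t ⟨h1, h2, h⟩
  have hspec : ∀ t : List ℝ, (∀ l ∈ t.getLast?, l < x) → (t ≠ [] → x < σ t) →
      (∀ l ∈ t.getLast?, l < nxt σ x t) ∧ nxt σ x t < x ∧ x < σ (t ++ [nxt σ x t]) := by
    intro t h1 h2
    have hex := key t h1 h2
    simp only [nxt, dif_pos hex]
    exact hex.choose_spec
  have inv : ∀ n, (∀ l ∈ (Lseq σ x n).getLast?, l < x) ∧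
      (Lseq σ x n ≠ [] → x < σ (Lseq σ x n)) := by
    intro n
    induction n with
    | zero => simp [Lseq]
    | succ n ih =>
      obtain ⟨h1, h2⟩ := ih
      obtain ⟨g1, g2, g3⟩ := hspec (Lseq σ x n) h1 h2
      refine ⟨?_, fun _ => ?_⟩
      · intro l hl
        have : (Lseq σ x (n + 1)).getLast? = some (nxt σ x (Lseq σ x n)) := by
          show (Lseq σ x n ++ [nxt σ x (Lseq σ x n)]).getLast? = _
          exact List.getLast?_concat
        rw [this, Option.mem_some_iff] at hl
        rw [← hl]; exact g2
      · show x < σ (Lseq σ x n ++ [nxt σ x (Lseq σ x n)])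
        exact g3
  have hspec' : ∀ n, (∀ l ∈ (Lseq σ x n).getLast?, l < nxt σ x (Lseq σ x n)) ∧
      nxt σ x (Lseq σ x n) < x ∧
      x < σ (Lseq σ x n ++ [nxt σ x (Lseq σ x n)]) :=
    fun n => hspec _ (inv n).1 (inv n).2
  refine ⟨fun n => nxt σ x (Lseq σ x n), ?_, ?_⟩
  · apply strictMono_nat_of_lt_succ
    intro n
    apply (hspec' (n + 1)).1
    show (Lseq σ x n ++ [nxt σ x (Lseq σ x n)]).getLast? = _
    exact List.getLast?_concat
  · intro n
    have hmap : ∀ m, (List.range (m + 1)).map (fun k => nxt σ x (Lseq σ x k)) =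
        Lseq σ x (m + 1) := by
      intro m
      induction m with
      | zero => rfl
      | succ m ih =>
        rw [List.range_succ, List.map_append, ih]
        rfl
    refine ⟨(hspec' n).2.1, ?_⟩
    rw [hmap n]
    exact (hspec' n).2.2
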